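/- Let d ≥ 1 and let M be a submonoid of ℤ^d whose ℚ-linear span is all of ℚ^d. Let ⪯ be a total order on M such that (i) for m, m' ∈ M with m' − m ∈ M one has m ⪯ m', and (ii) for all m, m', k ∈ M, m ⪯ m' implies m + k ⪯ m' + k. Then there exists a total order ⪯' on ℚ^d extending ⪯ (i.e., agreeing with ⪯ on M) which is invariant under translation (q ⪯' q' implies q + p ⪯' q' + p for all p ∈ ℚ^d) and invariant under multiplication by positive rational scalars (q ⪯' q' implies cq ⪯' cq' for all rational c > 0). -/
import Mathlib

/-- let `d ≥ 1` and let `M` be a submonoid of `ℤ^d` whose `ℚ`-linear span is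
all of `ℚ^d`.  Let `⪯` be a total order on `M` such that (i) `m ⪯ m'` whenever
`m' − m ∈ M`, and (ii) `m ⪯ m'` implies `m + k ⪯ m' + k` for all `k ∈ M`.  Then there is a
total order `⪯'` on `ℚ^d` agreeing with `⪯` on `M`, invariant under translation and under
multiplication by positive rational scalars. -/
theorem monomial_order_extends_to_rat_vector_space
    (d : ℕ) (hd : 1 ≤ d) (M : AddSubmonoid (Fin d → ℤ))
    (hspan : Submodule.span ℚ
      ((fun m : Fin d → ℤ => fun i => (m i : ℚ)) '' (M : Set (Fin d → ℤ))) = ⊤)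
    (le : M → M → Prop)
    (hrefl : ∀ a, le a a)
    (htrans : ∀ a b c, le a b → le b c → le a c)
    (hantisymm : ∀ a b, le a b → le b a → a = b)
    (htotal : ∀ a b, le a b ∨ le b a)
    (hdvd : ∀ a b : M, ((b : Fin d → ℤ) - (a : Fin d → ℤ)) ∈ M → le a b)
    (hadd : ∀ a b k : M, le a b → le (a + k) (b + k)) :
    ∃ le' : (Fin d → ℚ) → (Fin d → ℚ) → Prop,
      (∀ x, le' x x) ∧
      (∀ x y z, le' x y → le' y z → le' x z) ∧
      (∀ x y, le' x y → le' y x → x = y) ∧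
      (∀ x y, le' x y ∨ le' y x) ∧
      (∀ a b : M, (le' (fun i => ((a : Fin d → ℤ) i : ℚ)) (fun i => ((b : Fin d → ℤ) i : ℚ))
        ↔ le a b)) ∧
      (∀ x y p : Fin d → ℚ, le' x y → le' (x + p) (y + p)) ∧
      (∀ (x y : Fin d → ℚ) (c : ℚ), 0 < c → le' x y → le' (c • x) (c • y)) := by
  classical
  -- coercion helpers
  have hcoe_add : ∀ (a b : M) (i : Fin d),
      (((a + b : M) : Fin d → ℤ) i : ℚ)
        = ((a : Fin d → ℤ) i : ℚ) + ((b : Fin d → ℤ) i : ℚ) := by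
    intro a b i
    have : ((a + b : M) : Fin d → ℤ) i = (a : Fin d → ℤ) i + (b : Fin d → ℤ) i := by
      simp
    rw [this]; push_cast; ring
  have hcoe_smul : ∀ (n : ℕ) (a : M) (i : Fin d),
      (((n • a : M) : Fin d → ℤ) i : ℚ) = (n : ℚ) * ((a : Fin d → ℤ) i : ℚ) := by
    intro n a i
    induction n with
    | zero => simp
    | succ n ih =>
      rw [succ_nsmul]
      have h := ih
      have : (((n • a + a : M) : Fin d → ℤ) i : ℚ)
          = (((n • a : M) : Fin d → ℤ) i : ℚ) + ((a : Fin d → ℤ) i : ℚ) := by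
        have : ((n • a + a : M) : Fin d → ℤ) i
            = ((n • a : M) : Fin d → ℤ) i + (a : Fin d → ℤ) i := by simp
        rw [this]; push_cast; ring
      rw [this, h]; push_cast; ring
  have hcoe_zero : ∀ i : Fin d, (((0 : M) : Fin d → ℤ) i : ℚ) = 0 := by
    intro i; simp
  have hinj : ∀ a b : M,
      (∀ i, ((a : Fin d → ℤ) i : ℚ) = ((b : Fin d → ℤ) i : ℚ)) → a = b := by
    intro a b h
    apply Subtype.ext
    funext i
    exact_mod_cast h i
  -- nsmul monotonicity
  have hsmul : ∀ (k : ℕ) (a b : M), le a b → le (k • a) (k • b) := by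
    intro k
    induction k with
    | zero => intro a b _; simp only [zero_smul]; exact hrefl 0
    | succ k ih =>
      intro a b h
      have h1 : le (a + k • a) (b + k • a) := hadd a b (k • a) h
      have h2 : le (k • a + b) (k • b + b) := hadd (k • a) (k • b) b (ih a b h)
      have h3 : le (a + k • a) (k • b + b) :=
        htrans _ _ _ h1 (by rwa [add_comm (k • a) b] at h2)
      rw [succ_nsmul, succ_nsmul, add_comm (k • a) a]
      exact h3
  have hcomb : ∀ (n m : ℕ) (a b a' b' : M), le a b → le a' b' →
      le (m • a + n • a') (m • b + n • a') ∧ le (m • b + n • a') (m • b + n • b') := by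
    intro n m a b a' b' h h'
    refine ⟨hadd _ _ _ (hsmul m a b h), ?_⟩
    have := hadd _ _ (m • b) (hsmul n a' b' h')
    rwa [add_comm (n • a') (m • b), add_comm (n • b') (m • b)] at this
  -- the order
  set Rel : (Fin d → ℚ) → (Fin d → ℚ) → Prop := fun x y =>
    ∃ (n : ℕ) (a b : M), 0 < n ∧
      (∀ i, (n : ℚ) * (y i - x i)
        = ((b : Fin d → ℤ) i : ℚ) - ((a : Fin d → ℤ) i : ℚ)) ∧
      le a b with hReldef
  refine ⟨Rel, ?_, ?_, ?_, ?_, ?_, ?_, ?_⟩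
  · -- refl
    intro x
    exact ⟨1, 0, 0, one_pos, fun i => by rw [hcoe_zero]; ring, hrefl 0⟩
  · -- trans
    rintro x y z ⟨n, a, b, hn, hx, hab⟩ ⟨m, a', b', hm, hy, hab'⟩
    refine ⟨n * m, m • a + n • a', m • b + n • b', Nat.mul_pos hn hm, fun i => ?_, ?_⟩
    · rw [hcoe_add, hcoe_add, hcoe_smul, hcoe_smul, hcoe_smul, hcoe_smul]
      push_cast
      linear_combination (m : ℚ) * hx i + (n : ℚ) * hy i
    · obtain ⟨l1, l2⟩ := hcomb n m a b a' b' hab hab'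
      exact htrans _ _ _ l1 l2
  · -- antisymm
    rintro x y ⟨n, a, b, hn, hx, hab⟩ ⟨m, a', b', hm, hy, hab'⟩
    have e : m • b + n • b' = m • a + n • a' := by
      apply hinj
      intro i
      rw [hcoe_add, hcoe_add, hcoe_smul, hcoe_smul, hcoe_smul, hcoe_smul]
      linear_combination (-(m : ℚ)) * hx i + (-(n : ℚ)) * hy i
    obtain ⟨l1, l2⟩ := hcomb n m a b a' b' hab hab'
    rw [e] at l2
    have e2 : m • a + n • a' = m • b + n • a' := hantisymm _ _ l1 l2
    have hmQ : (m : ℚ) ≠ 0 := by exact_mod_cast hm.ne'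
    have hnQ : (n : ℚ) ≠ 0 := by exact_mod_cast hn.ne'
    have hab2 : ∀ i, ((a : Fin d → ℤ) i : ℚ) = ((b : Fin d → ℤ) i : ℚ) := by
      intro i
      have := congrArg (fun z : M => ((z : Fin d → ℤ) i : ℚ)) e2
      simp only [hcoe_add, hcoe_smul] at this
      have h2 : (m : ℚ) * ((a : Fin d → ℤ) i : ℚ) = (m : ℚ) * ((b : Fin d → ℤ) i : ℚ) := by
        linarith
      exact mul_left_cancel₀ hmQ h2
    funext i
    have := hx i
    rw [hab2 i] at this
    have : (n : ℚ) * (y i - x i) = 0 := by linarith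
    have := mul_eq_zero.mp this
    rcases this with h | h
    · exact absurd h hnQ
    · linarith [sub_eq_zero.mp h]
  · -- total
    have hT : ∀ x : Fin d → ℚ, ∃ (n : ℕ) (a b : M), 0 < n ∧
        ∀ i, (n : ℚ) * x i = ((b : Fin d → ℤ) i : ℚ) - ((a : Fin d → ℤ) i : ℚ) := by
      let T : Submodule ℚ (Fin d → ℚ) :=
        { carrier := {x | ∃ (n : ℕ) (a b : M), 0 < n ∧
            ∀ i, (n : ℚ) * x i = ((b : Fin d → ℤ) i : ℚ) - ((a : Fin d → ℤ) i : ℚ)}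
          zero_mem' := ⟨1, 0, 0, one_pos, fun i => by simp [hcoe_zero]⟩
          add_mem' := by
            rintro x y ⟨n, a, b, hn, hx⟩ ⟨m, a', b', hm, hy⟩
            refine ⟨n * m, m • a + n • a', m • b + n • b', Nat.mul_pos hn hm, fun i => ?_⟩
            rw [hcoe_add, hcoe_add, hcoe_smul, hcoe_smul, hcoe_smul, hcoe_smul]
            push_cast
            simp only [Pi.add_apply]
            linear_combination (m : ℚ) * hx i + (n : ℚ) * hy i
          smul_mem' := by
            rintro c x ⟨n, a, b, hn, hx⟩
            have hdpos : 0 < c.den := c.pos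
            have hdQ : ((c.den : ℚ)) * c = (c.num : ℚ) := by
              rw [mul_comm, Rat.mul_den_eq_num]
            rcases le_or_gt 0 c with hc | hc
            · have hnum : ((c.num.toNat : ℤ) : ℚ) = (c.num : ℚ) := by
                exact_mod_cast congrArg (fun z : ℤ => (z : ℚ))
                  (Int.toNat_of_nonneg (Rat.num_nonneg.mpr hc))
              refine ⟨n * c.den, c.num.toNat • a, c.num.toNat • b,
                Nat.mul_pos hn hdpos, fun i => ?_⟩
              rw [hcoe_smul, hcoe_smul]
              push_cast
              simp only [Pi.smul_apply, smul_eq_mul]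
              have hnum' : (c.num.toNat : ℚ) = (c.num : ℚ) := by exact_mod_cast hnum
              rw [hnum', ← hdQ]
              linear_combination ((c.den : ℚ) * c) * hx i
            · have hneg : (0 : ℤ) ≤ -c.num := by
                have : c.num < 0 := Rat.num_neg.mpr hc
                omega
              have hnum' : (((-c.num).toNat : ℚ)) = ((-c.num : ℤ) : ℚ) := by
                exact_mod_cast congrArg (fun z : ℤ => (z : ℚ)) (Int.toNat_of_nonneg hneg)
              refine ⟨n * c.den, (-c.num).toNat • b, (-c.num).toNat • a,
                Nat.mul_pos hn hdpos, fun i => ?_⟩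
              rw [hcoe_smul, hcoe_smul]
              push_cast
              simp only [Pi.smul_apply, smul_eq_mul]
              rw [hnum']
              push_cast
              have : ((-c.num : ℤ) : ℚ) = -((c.den : ℚ) * c) := by
                push_cast; rw [hdQ]
              have goal' : ((n : ℚ) * (c.den : ℚ)) * (c * x i)
                  = -((c.den : ℚ) * c) * ((a : Fin d → ℤ) i : ℚ)
                    - -((c.den : ℚ) * c) * ((b : Fin d → ℤ) i : ℚ) := by
                linear_combination ((c.den : ℚ) * c) * hx i
              calc ((n : ℚ) * (c.den : ℚ)) * (c * x i)
                  = -((c.den : ℚ) * c) * ((a : Fin d → ℤ) i : ℚ)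
                    - -((c.den : ℚ) * c) * ((b : Fin d → ℤ) i : ℚ) := goal'
                _ = -(c.num : ℚ) * ((a : Fin d → ℤ) i : ℚ)
                    - -(c.num : ℚ) * ((b : Fin d → ℤ) i : ℚ) := by rw [hdQ]
        }
      intro x
      have hsub : Submodule.span ℚ
          ((fun m : Fin d → ℤ => fun i => (m i : ℚ)) '' (M : Set (Fin d → ℤ))) ≤ T := by
        apply Submodule.span_le.mpr
        rintro _ ⟨m, hm, rfl⟩
        exact ⟨1, 0, ⟨m, hm⟩, one_pos, fun i => by rw [hcoe_zero]; push_cast; ring⟩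
      have : x ∈ T := hsub (hspan ▸ Submodule.mem_top)
      exact this
    intro x y
    obtain ⟨n, a, b, hn, h⟩ := hT (y - x)
    simp only [Pi.sub_apply] at h
    rcases htotal a b with hab | hba
    · exact Or.inl ⟨n, a, b, hn, h, hab⟩
    · refine Or.inr ⟨n, b, a, hn, fun i => ?_, hba⟩
      linarith [h i]
  · -- extension
    intro a b
    constructor
    · rintro ⟨n, a', b', hn, h, hab'⟩
      simp only at h
      rcases htotal a b with hab | hba
      · exact hab
      · have e : n • b + a' = n • a + b' := by
          apply hinj
          intro i
          rw [hcoe_add, hcoe_add, hcoe_smul, hcoe_smul]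
          linear_combination h i
        have l1 : le (n • b + a') (n • a + a') := hadd _ _ _ (hsmul n b a hba)
        have l2 : le (n • a + a') (n • b + a') := by
          have := hadd a' b' (n • a) hab'
          rw [add_comm a' (n • a), add_comm b' (n • a)] at this
          rwa [← e] at this
        have e2 : n • a + a' = n • b + a' := hantisymm _ _ l2 l1
        have hnQ : (n : ℚ) ≠ 0 := by exact_mod_cast hn.ne'
        have : a = b := by
          apply hinj
          intro i
          have := congrArg (fun z : M => ((z : Fin d → ℤ) i : ℚ)) e2
          simp only [hcoe_add, hcoe_smul] at this
          have h2 : (n : ℚ) * ((a : Fin d → ℤ) i : ℚ)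
              = (n : ℚ) * ((b : Fin d → ℤ) i : ℚ) := by linarith
          exact mul_left_cancel₀ hnQ h2
        rw [this]; exact hrefl b
    · intro hab
      exact ⟨1, a, b, one_pos, fun i => by push_cast; ring, hab⟩
  · -- translation
    rintro x y p ⟨n, a, b, hn, h, hab⟩
    refine ⟨n, a, b, hn, fun i => ?_, hab⟩
    simp only [Pi.add_apply]
    linear_combination h i
  · -- scaling
    rintro x y c hc ⟨n, a, b, hn, h, hab⟩
    have hdpos : 0 < c.den := c.pos
    have hdQ : ((c.den : ℚ)) * c = (c.num : ℚ) := by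
      rw [mul_comm, Rat.mul_den_eq_num]
    have hnum' : (c.num.toNat : ℚ) = (c.num : ℚ) := by
      exact_mod_cast congrArg (fun z : ℤ => (z : ℚ)) (Int.toNat_of_nonneg (le_of_lt (Rat.num_pos.mpr hc)))
    refine ⟨n * c.den, c.num.toNat • a, c.num.toNat • b, Nat.mul_pos hn hdpos,
      fun i => ?_, hsmul _ _ _ hab⟩
    rw [hcoe_smul, hcoe_smul]
    push_cast
    simp only [Pi.smul_apply, smul_eq_mul]
    rw [hnum', ← hdQ]
    linear_combination ((c.den : ℚ) * c) * h i
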